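/- Let d, N be integers with N > d ≥ 2 and let j be an integer with 0 ≤ j ≤ d-2. Define S_j := Σ_{i=0}^{d-j-2} binom(N-j-1, i) (and S_j := 0 if j ≥ d-1). Then S_{j+1} / binom(N-j-2, d-j-2) < S_j / binom(N-j-1, d-j-1). -/
import Mathlib


open Filter Finset Real

/-- Log-concavity of binomial coefficients (cross form). -/
lemma choose_logconcave (n i k : ℕ) (hik : i ≤ k) :
    n.choose i * n.choose (k+1) ≤ n.choose (i+1) * n.choose k := by
  have h1 : n.choose (i+1) * (i+1) = n.choose i * (n - i) := Nat.choose_succ_right_eq n i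
  have h2 : n.choose (k+1) * (k+1) = n.choose k * (n - k) := Nat.choose_succ_right_eq n k
  have hpos : 0 < (i+1) * (k+1) := by positivity
  refine Nat.le_of_mul_le_mul_right ?_ hpos
  calc n.choose i * n.choose (k+1) * ((i+1)*(k+1))
      = n.choose i * (n.choose (k+1) * (k+1)) * (i+1) := by ring
    _ = n.choose i * (n.choose k * (n - k)) * (i+1) := by rw [h2]
    _ ≤ n.choose i * (n.choose k * (n - i)) * (k+1) := by
        apply Nat.mul_le_mul
        · exact Nat.mul_le_mul_left _ (Nat.mul_le_mul_left _ (Nat.sub_le_sub_left hik n))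
        · omega
    _ = n.choose i * (n - i) * n.choose k * (k+1) := by ring
    _ = n.choose (i+1) * (i+1) * n.choose k * (k+1) := by rw [h1]
    _ = n.choose (i+1) * n.choose k * ((i+1)*(k+1)) := by ring

lemma key_nat (n k : ℕ) (hk : k + 1 ≤ n) :
    (∑ i ∈ Finset.range k, n.choose i) * (n+1).choose (k+1)
      < (∑ i ∈ Finset.range (k+1), (n+1).choose i) * n.choose k := by
  set A := ∑ i ∈ Finset.range k, n.choose i with hA
  set B := n.choose k with hBdef
  set X := ∑ i ∈ Finset.range k, n.choose (i+1) with hXdef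
  have hB : 0 < B := Nat.choose_pos (by omega)
  -- X + 1 = A + B
  have hX : X + 1 = A + B := by
    have h := Finset.sum_range_succ' (fun i => n.choose i) k
    have h' := Finset.sum_range_succ (fun i => n.choose i) k
    simp only [Nat.choose_zero_right] at h
    omega
  -- sum over (n+1) equals 2A + B
  have hsum : ∑ i ∈ Finset.range (k+1), (n+1).choose i = 2*A + B := by
    have h := Finset.sum_range_succ' (fun i => (n+1).choose i) k
    have hp : ∑ i ∈ Finset.range k, (n+1).choose (i+1)
        = A + X := by
      rw [hA, hXdef, ← Finset.sum_add_distrib]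
      exact Finset.sum_congr rfl fun i _ => Nat.choose_succ_succ n i
    simp only [Nat.choose_zero_right] at h
    omega
  -- termwise log-concavity
  have hterm : A * n.choose (k+1) ≤ B * X := by
    rw [hA, hXdef, Finset.sum_mul, Finset.mul_sum]
    refine Finset.sum_le_sum fun i hi => ?_
    have hik : i ≤ k := le_of_lt (Finset.mem_range.mp hi)
    calc n.choose i * n.choose (k+1) ≤ n.choose (i+1) * n.choose k :=
          choose_logconcave n i k hik
      _ = B * n.choose (i+1) := by rw [mul_comm]
  -- Pascal
  have hP : (n+1).choose (k+1) = B + n.choose (k+1) := Nat.choose_succ_succ n k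
  rw [hsum, hP]
  have : A * n.choose (k+1) ≤ B * X := hterm
  nlinarith [hB, hX, this]

/-- `S d N j = Σ_{i=0}^{d-j-2} C(N-j-1, i)` (a partial binomial sum); by natural
subtraction this is the empty sum `0` when `j ≥ d-1`. -/
noncomputable def S (d N j : ℕ) : ℝ :=
  ∑ i ∈ Finset.range (d - j - 1), ((N - j - 1).choose i : ℝ)

theorem S_ratio_strict_mono (d N j : ℕ) (hd : 2 ≤ d) (hdN : d < N) (hj : j ≤ d - 2) :
    S d N (j + 1) / ((N - j - 2).choose (d - j - 2) : ℝ) <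
      S d N j / ((N - j - 1).choose (d - j - 1) : ℝ) := by
  obtain ⟨k1, hk1⟩ : ∃ k1, d - j - 1 = k1 + 1 := ⟨d - j - 2, by omega⟩
  obtain ⟨n1, hn1⟩ : ∃ n1, N - j - 1 = n1 + 1 := ⟨N - j - 2, by omega⟩
  have e1 : d - (j+1) - 1 = k1 := by omega
  have e2 : N - (j+1) - 1 = n1 := by omega
  have e3 : N - j - 2 = n1 := by omega
  have e4 : d - j - 2 = k1 := by omega
  have hk : k1 + 1 ≤ n1 := by omega
  unfold S
  rw [e1, e2, e3, e4, hk1, hn1]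
  have h1 : (0:ℝ) < (n1.choose k1 : ℝ) := by
    exact_mod_cast Nat.choose_pos (by omega)
  have h2 : (0:ℝ) < ((n1+1).choose (k1+1) : ℝ) := by
    exact_mod_cast Nat.choose_pos (by omega)
  rw [div_lt_div_iff₀ h1 h2]
  have h := key_nat n1 k1 hk
  exact_mod_cast h
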